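/- The number x_n of permutations of size n in the class X = Av(2143, 2413, 3142, 3412) satisfies the generating function identity Σ_{n≥0} x_n t^n = (1−2t)/(1−4t+2t²); equivalently, x_0 = 1, x_1 = 1, x_2 = 2, and x_n = 4x_{n−1} − 2x_{n−2} for n ≥ 3. -/
import Mathlib


open Equiv Filter

/-- A permutation pattern: a size together with a permutation of that size. -/
abbrev Pattern := Σ n : ℕ, Equiv.Perm (Fin n)

/-- Direct sum of permutations: `α` to the left of and below `β`. -/
def sumPerm {m n : ℕ} (α : Equiv.Perm (Fin m)) (β : Equiv.Perm (Fin n)) :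
    Equiv.Perm (Fin (m + n)) :=
  finSumFinEquiv.symm.trans ((α.sumCongr β).trans finSumFinEquiv)

/-- Skew sum of permutations: `α` to the left of and above `β`. -/
def skewPerm {m n : ℕ} (α : Equiv.Perm (Fin m)) (β : Equiv.Perm (Fin n)) :
    Equiv.Perm (Fin (m + n)) :=
  finSumFinEquiv.symm.trans ((α.sumCongr β).trans
    ((Equiv.sumComm (Fin m) (Fin n)).trans (finSumFinEquiv.trans (finCongr (Nat.add_comm n m)))))

/-- Pattern containment: `Contains p q` means `p` is contained (as a pattern) in `q`. -/
def Contains (p q : Pattern) : Prop :=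
  ∃ f : Fin p.1 → Fin q.1, StrictMono f ∧ ∀ s t, p.2 s < p.2 t ↔ q.2 (f s) < q.2 (f t)

def sumP (p q : Pattern) : Pattern := ⟨p.1 + q.1, sumPerm p.2 q.2⟩
def skewP (p q : Pattern) : Pattern := ⟨p.1 + q.1, skewPerm p.2 q.2⟩

/-- The singleton permutation 1. -/
def onePat : Pattern := ⟨1, 1⟩
/-- The increasing permutation of size `k`. -/
def idPat (k : ℕ) : Pattern := ⟨k, 1⟩
/-- The decreasing permutation of size `k`. -/
def revPat (k : ℕ) : Pattern := ⟨k, Fin.revPerm⟩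

def BeginsWithMin (p : Pattern) : Prop := ∃ h : 0 < p.1, p.2 ⟨0, h⟩ = ⟨0, h⟩
def EndsWithMax (p : Pattern) : Prop :=
  ∃ h : 0 < p.1, p.2 ⟨p.1 - 1, by omega⟩ = ⟨p.1 - 1, by omega⟩
def BeginsWithMax (p : Pattern) : Prop :=
  ∃ h : 0 < p.1, p.2 ⟨0, h⟩ = ⟨p.1 - 1, by omega⟩
def EndsWithMin (p : Pattern) : Prop :=
  ∃ h : 0 < p.1, p.2 ⟨p.1 - 1, by omega⟩ = ⟨0, h⟩

def IsIncreasingP (p : Pattern) : Prop := ∀ i j : Fin p.1, i ≤ j → p.2 i ≤ p.2 j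
def IsDecreasingP (p : Pattern) : Prop := ∀ i j : Fin p.1, i ≤ j → p.2 j ≤ p.2 i
/-- Monotone permutations (increasing or decreasing). -/
def MonotoneP (p : Pattern) : Prop := IsIncreasingP p ∨ IsDecreasingP p
/-- A crossed permutation is one that is not monotone. -/
def CrossedP (p : Pattern) : Prop := ¬ MonotoneP p
/-- Positive: size at least 2, begins with its minimum or ends with its maximum. -/
def PositiveP (p : Pattern) : Prop := 2 ≤ p.1 ∧ (BeginsWithMin p ∨ EndsWithMax p)
/-- Negative: size at least 2, begins with its maximum or ends with its minimum. -/
def NegativeP (p : Pattern) : Prop := 2 ≤ p.1 ∧ (BeginsWithMax p ∨ EndsWithMin p)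

/-- The class X: the closure of {1} under π ↦ 1⊕π, 1⊖π, π⊕1, π⊖1. -/
inductive InX : Pattern → Prop
  | base : InX onePat
  | sumL {p : Pattern} : InX p → InX (sumP onePat p)
  | skewL {p : Pattern} : InX p → InX (skewP onePat p)
  | sumR {p : Pattern} : InX p → InX (sumP p onePat)
  | skewR {p : Pattern} : InX p → InX (skewP p onePat)

/-- Membership in X, with the empty permutation included (for size 0). -/
def InX0 (p : Pattern) : Prop := InX p ∨ p.1 = 0

/-- The number of permutations of size n in the class X. -/
noncomputable def xcount (n : ℕ) : ℕ :=
  Nat.card {σ : Equiv.Perm (Fin n) // InX0 ⟨n, σ⟩}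

/-- x_0 = 1, x_1 = 1, x_2 = 2 and x_n = 4·x_{n-1} − 2·x_{n-2} for n ≥ 3
(stated additively, equivalently over ℕ). -/

def insA {n : ℕ} (τ : Perm (Fin n)) : Perm (Fin (n+1)) where
  toFun := Fin.cases 0 (fun i => (τ i).succ)
  invFun := Fin.cases 0 (fun i => (τ.symm i).succ)
  left_inv := by
    intro x
    induction x using Fin.cases with
    | zero => simp
    | succ i => simp
  right_inv := by
    intro x
    induction x using Fin.cases with
    | zero => simp
    | succ i => simp

@[simp] lemma insA_zero {n} (τ : Perm (Fin n)) : insA τ 0 = 0 := rfl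
@[simp] lemma insA_succ {n} (τ : Perm (Fin n)) (i : Fin n) : insA τ i.succ = (τ i).succ := by
  simp [insA, Equiv.coe_fn_mk]

def insB {n : ℕ} (τ : Perm (Fin n)) : Perm (Fin (n+1)) where
  toFun := Fin.cases (Fin.last n) (fun i => (τ i).castSucc)
  invFun := Fin.lastCases 0 (fun i => (τ.symm i).succ)
  left_inv := by
    intro x
    induction x using Fin.cases with
    | zero => simp
    | succ i => simp
  right_inv := by
    intro x
    induction x using Fin.lastCases with
    | last => simp
    | cast i => simp

@[simp] lemma insB_zero {n} (τ : Perm (Fin n)) : insB τ 0 = Fin.last n := rfl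
@[simp] lemma insB_succ {n} (τ : Perm (Fin n)) (i : Fin n) : insB τ i.succ = (τ i).castSucc := by
  simp [insB, Equiv.coe_fn_mk]

def insC {n : ℕ} (τ : Perm (Fin n)) : Perm (Fin (n+1)) where
  toFun := Fin.lastCases (Fin.last n) (fun i => (τ i).castSucc)
  invFun := Fin.lastCases (Fin.last n) (fun i => (τ.symm i).castSucc)
  left_inv := by
    intro x
    induction x using Fin.lastCases with
    | last => simp
    | cast i => simp
  right_inv := by
    intro x
    induction x using Fin.lastCases with
    | last => simp
    | cast i => simp

@[simp] lemma insC_last {n} (τ : Perm (Fin n)) : insC τ (Fin.last n) = Fin.last n := by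
  simp [insC, Equiv.coe_fn_mk]
@[simp] lemma insC_castSucc {n} (τ : Perm (Fin n)) (i : Fin n) :
    insC τ i.castSucc = (τ i).castSucc := by
  simp [insC, Equiv.coe_fn_mk]

def insD {n : ℕ} (τ : Perm (Fin n)) : Perm (Fin (n+1)) where
  toFun := Fin.lastCases 0 (fun i => (τ i).succ)
  invFun := Fin.cases (Fin.last n) (fun i => (τ.symm i).castSucc)
  left_inv := by
    intro x
    induction x using Fin.lastCases with
    | last => simp
    | cast i => simp
  right_inv := by
    intro x
    induction x using Fin.cases with
    | zero => simp
    | succ i => simp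

@[simp] lemma insD_last {n} (τ : Perm (Fin n)) : insD τ (Fin.last n) = 0 := by
  simp [insD, Equiv.coe_fn_mk]
@[simp] lemma insD_castSucc {n} (τ : Perm (Fin n)) (i : Fin n) :
    insD τ i.castSucc = (τ i).succ := by
  simp [insD, Equiv.coe_fn_mk]


section inj
variable {n : ℕ} {τ ρ : Perm (Fin n)}

lemma insA_inj (h : insA τ = insA ρ) : τ = ρ := by
  ext i
  have := DFunLike.congr_fun h i.succ
  simpa [Fin.succ_injective, Fin.val_eq_val] using this

lemma insB_inj (h : insB τ = insB ρ) : τ = ρ := by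
  ext i
  have := DFunLike.congr_fun h i.succ
  simpa [Fin.val_eq_val] using this

lemma insC_inj (h : insC τ = insC ρ) : τ = ρ := by
  ext i
  have := DFunLike.congr_fun h i.castSucc
  simpa [Fin.val_eq_val] using this

lemma insD_inj (h : insD τ = insD ρ) : τ = ρ := by
  ext i
  have := DFunLike.congr_fun h i.castSucc
  simpa [Fin.val_eq_val] using this

lemma insAC_one : insA (1 : Perm (Fin 1)) = insC 1 := by
  apply Equiv.ext; intro x
  induction x using Fin.cases with
  | zero =>
    rw [insA_zero, show (0 : Fin 2) = Fin.castSucc 0 from rfl, insC_castSucc, Perm.one_apply,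
      Fin.castSucc_zero]
  | succ i =>
    have hi : i = 0 := Subsingleton.elim i 0
    subst hi
    rw [insA_succ, Perm.one_apply, show Fin.succ (0 : Fin 1) = Fin.last 1 from rfl, insC_last]

lemma insBD_one : insB (1 : Perm (Fin 1)) = insD 1 := by
  apply Equiv.ext; intro x
  induction x using Fin.cases with
  | zero =>
    rw [insB_zero, show (0 : Fin 2) = Fin.castSucc 0 from rfl, insD_castSucc, Perm.one_apply,
      show Fin.succ (0 : Fin 1) = Fin.last 1 from rfl]
  | succ i =>
    have hi : i = 0 := Subsingleton.elim i 0
    subst hi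
    rw [insB_succ, Perm.one_apply, show Fin.succ (0 : Fin 1) = Fin.last 1 from rfl, insD_last,
      Fin.castSucc_zero]

lemma comAC (τ : Perm (Fin n)) : insA (insC τ) = insC (insA τ) := by
  apply Equiv.ext
  intro x
  induction x using Fin.cases with
  | zero =>
    rw [show (0 : Fin (n+2)) = Fin.castSucc 0 from rfl, insC_castSucc, insA_zero,
      Fin.castSucc_zero, insA_zero]
  | succ i =>
    induction i using Fin.lastCases with
    | last => rw [insA_succ, insC_last, Fin.succ_last, insC_last]
    | cast j =>
      conv_lhs => rw [insA_succ, insC_castSucc]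
      conv_rhs => rw [Fin.succ_castSucc, insC_castSucc, insA_succ]
      exact Fin.succ_castSucc _

lemma comBD (τ : Perm (Fin n)) : insB (insD τ) = insD (insB τ) := by
  apply Equiv.ext
  intro x
  induction x using Fin.cases with
  | zero =>
    rw [show (0 : Fin (n+2)) = Fin.castSucc 0 from rfl, insD_castSucc, insB_zero, Fin.succ_last,
      Fin.castSucc_zero, insB_zero]
  | succ i =>
    induction i using Fin.lastCases with
    | last => rw [insB_succ, insD_last, Fin.castSucc_zero, Fin.succ_last, insD_last]
    | cast j =>
      conv_lhs => rw [insB_succ, insD_castSucc]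
      conv_rhs => rw [Fin.succ_castSucc, insD_castSucc, insB_succ]
      exact (Fin.succ_castSucc _).symm
end inj


inductive InY : ∀ n : ℕ, Perm (Fin n) → Prop
  | base : InY 1 1
  | A {n : ℕ} {τ : Perm (Fin n)} : InY n τ → InY (n+1) (insA τ)
  | B {n : ℕ} {τ : Perm (Fin n)} : InY n τ → InY (n+1) (insB τ)
  | C {n : ℕ} {τ : Perm (Fin n)} : InY n τ → InY (n+1) (insC τ)
  | D {n : ℕ} {τ : Perm (Fin n)} : InY n τ → InY (n+1) (insD τ)

lemma perm_one_eq (τ : Perm (Fin 1)) : τ = 1 := Subsingleton.elim _ _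

lemma InY_one (τ : Perm (Fin 1)) : InY 1 τ := by
  have : τ = 1 := Subsingleton.elim _ _
  rw [this]; exact InY.base

lemma shapeY {n : ℕ} {σ : Perm (Fin (n+1))} (h : InY (n+1) σ) :
    σ 0 = 0 ∨ σ 0 = Fin.last n ∨ σ (Fin.last n) = Fin.last n ∨ σ (Fin.last n) = 0 := by
  cases h with
  | base => left; exact Perm.one_apply 0
  | A h => left; simp
  | B h => right; left; simp
  | C h => right; right; left; simp
  | D h => right; right; right; simp

-- helpers about Fin
lemma zero_eq_castSucc {n : ℕ} : (0 : Fin (n+2)) = Fin.castSucc 0 := rfl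
lemma last_eq_succ {n : ℕ} : (Fin.last (n+1)) = Fin.succ (Fin.last n) := (Fin.succ_last n).symm

/-- Deletion lemma for A: if `σ ∈ X` has first element minimal, it is `insA τ` with `τ ∈ X`. -/
lemma delA : ∀ n (σ : Perm (Fin (n+2))), InY (n+2) σ → σ 0 = 0 →
    ∃ τ : Perm (Fin (n+1)), InY (n+1) τ ∧ σ = insA τ := by
  intro n
  induction n with
  | zero =>
    intro σ h h0
    cases h with
    | A h => exact ⟨_, h, rfl⟩
    | B h => rw [insB_zero] at h0; exact absurd h0 (by simp [Fin.ext_iff])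
    | C h =>
      rename_i τ
      refine ⟨1, InY.base, ?_⟩
      rw [show τ = (1 : Perm (Fin 1)) from perm_one_eq τ, ← insAC_one]
    | D h =>
      rw [zero_eq_castSucc, insD_castSucc] at h0
      exact absurd h0 (Fin.succ_ne_zero _)
  | succ n IH =>
    intro σ h h0
    cases h with
    | A h => exact ⟨_, h, rfl⟩
    | B h => rw [insB_zero] at h0; exact absurd h0 (by simp [Fin.ext_iff])
    | C h =>
      rename_i τ
      rw [zero_eq_castSucc, insC_castSucc] at h0
      have h0' : τ 0 = 0 := Fin.castSucc_injective _ (by rw [h0, Fin.castSucc_zero])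
      obtain ⟨ρ, hρ, hτ⟩ := IH τ h h0'
      exact ⟨insC ρ, InY.C hρ, by rw [hτ, ← comAC]⟩
    | D h =>
      rw [zero_eq_castSucc, insD_castSucc] at h0
      exact absurd h0 (Fin.succ_ne_zero _)

/-- Deletion lemma for B. -/
lemma delB : ∀ n (σ : Perm (Fin (n+2))), InY (n+2) σ → σ 0 = Fin.last (n+1) →
    ∃ τ : Perm (Fin (n+1)), InY (n+1) τ ∧ σ = insB τ := by
  intro n
  induction n with
  | zero =>
    intro σ h h0
    cases h with
    | B h => exact ⟨_, h, rfl⟩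
    | A h => rw [insA_zero] at h0; exact absurd h0.symm (by simp [Fin.ext_iff])
    | C h =>
      rw [zero_eq_castSucc, insC_castSucc] at h0
      exact absurd h0 (Fin.castSucc_lt_last _).ne
    | D h =>
      rename_i τ
      refine ⟨1, InY.base, ?_⟩
      rw [show τ = (1 : Perm (Fin 1)) from perm_one_eq τ, ← insBD_one]
  | succ n IH =>
    intro σ h h0
    cases h with
    | B h => exact ⟨_, h, rfl⟩
    | A h => rw [insA_zero] at h0; exact absurd h0.symm (by simp [Fin.ext_iff])
    | C h =>
      rw [zero_eq_castSucc, insC_castSucc] at h0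
      exact absurd h0 (Fin.castSucc_lt_last _).ne
    | D h =>
      rename_i τ
      rw [zero_eq_castSucc, insD_castSucc] at h0
      have h0' : τ 0 = Fin.last (n+1) :=
        Fin.succ_injective _ (by rw [Fin.succ_last]; exact h0)
      obtain ⟨ρ, hρ, hτ⟩ := IH τ h h0'
      exact ⟨insD ρ, InY.D hρ, by rw [hτ, ← comBD]⟩

/-- Deletion lemma for C. -/
lemma delC : ∀ n (σ : Perm (Fin (n+2))), InY (n+2) σ → σ (Fin.last (n+1)) = Fin.last (n+1) →
    ∃ τ : Perm (Fin (n+1)), InY (n+1) τ ∧ σ = insC τ := by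
  intro n
  induction n with
  | zero =>
    intro σ h h0
    cases h with
    | C h => exact ⟨_, h, rfl⟩
    | D h => rw [insD_last] at h0; exact absurd h0.symm (by simp [Fin.ext_iff])
    | A h =>
      rename_i τ
      refine ⟨1, InY.base, ?_⟩
      rw [show τ = (1 : Perm (Fin 1)) from perm_one_eq τ, insAC_one]
    | B h =>
      rw [last_eq_succ, insB_succ] at h0
      exact absurd h0 (Fin.castSucc_lt_last _).ne
  | succ n IH =>
    intro σ h h0
    cases h with
    | C h => exact ⟨_, h, rfl⟩
    | D h => rw [insD_last] at h0; exact absurd h0.symm (by simp [Fin.ext_iff])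
    | A h =>
      rename_i τ
      rw [last_eq_succ, insA_succ, last_eq_succ] at h0
      have h0' : τ (Fin.last (n+1)) = Fin.last (n+1) := Fin.succ_injective _ h0
      obtain ⟨ρ, hρ, hτ⟩ := IH τ h h0'
      exact ⟨insA ρ, InY.A hρ, by rw [hτ, comAC]⟩
    | B h =>
      rw [last_eq_succ, insB_succ] at h0
      exact absurd h0 (Fin.castSucc_lt_last _).ne

/-- Deletion lemma for D. -/
lemma delD : ∀ n (σ : Perm (Fin (n+2))), InY (n+2) σ → σ (Fin.last (n+1)) = 0 →
    ∃ τ : Perm (Fin (n+1)), InY (n+1) τ ∧ σ = insD τ := by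
  intro n
  induction n with
  | zero =>
    intro σ h h0
    cases h with
    | D h => exact ⟨_, h, rfl⟩
    | C h => rw [insC_last] at h0; exact absurd h0 (by simp [Fin.ext_iff])
    | B h =>
      rename_i τ
      refine ⟨1, InY.base, ?_⟩
      rw [show τ = (1 : Perm (Fin 1)) from perm_one_eq τ, insBD_one]
    | A h =>
      rw [last_eq_succ, insA_succ] at h0
      exact absurd h0 (Fin.succ_ne_zero _)
  | succ n IH =>
    intro σ h h0
    cases h with
    | D h => exact ⟨_, h, rfl⟩
    | C h => rw [insC_last] at h0; exact absurd h0 (by simp [Fin.ext_iff])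
    | B h =>
      rename_i τ
      rw [last_eq_succ, insB_succ, zero_eq_castSucc] at h0
      have h0' : τ (Fin.last (n+1)) = 0 := Fin.castSucc_injective _ h0
      obtain ⟨ρ, hρ, hτ⟩ := IH τ h h0'
      exact ⟨insB ρ, InY.B hρ, by rw [hτ, comBD]⟩
    | A h =>
      rw [last_eq_succ, insA_succ] at h0
      exact absurd h0 (Fin.succ_ne_zero _)


section transfer
variable {m n : ℕ}

lemma sumPerm_castAdd (α : Perm (Fin m)) (β : Perm (Fin n)) (i : Fin m) :
    sumPerm α β (Fin.castAdd n i) = Fin.castAdd n (α i) := by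
  simp [sumPerm]

lemma sumPerm_natAdd (α : Perm (Fin m)) (β : Perm (Fin n)) (j : Fin n) :
    sumPerm α β (Fin.natAdd m j) = Fin.natAdd m (β j) := by
  simp [sumPerm]

lemma skewPerm_castAdd (α : Perm (Fin m)) (β : Perm (Fin n)) (i : Fin m) :
    skewPerm α β (Fin.castAdd n i) = Fin.cast (Nat.add_comm n m) (Fin.natAdd n (α i)) := by
  simp [skewPerm]

lemma skewPerm_natAdd (α : Perm (Fin m)) (β : Perm (Fin n)) (j : Fin n) :
    skewPerm α β (Fin.natAdd m j) = Fin.cast (Nat.add_comm n m) (Fin.castAdd m (β j)) := by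
  simp [skewPerm]

lemma pat_congr (h : m = n) {σ : Perm (Fin m)} {τ : Perm (Fin n)}
    (he : ∀ i : Fin m, (σ i : ℕ) = (τ (Fin.cast h i) : ℕ)) :
    (⟨m, σ⟩ : Pattern) = ⟨n, τ⟩ := by
  subst h
  have : σ = τ := by
    apply Equiv.ext
    intro i
    exact Fin.ext (by simpa using he i)
  rw [this]

lemma eqA (τ : Perm (Fin n)) : sumP onePat ⟨n, τ⟩ = (⟨n + 1, insA τ⟩ : Pattern) := by
  show (⟨1 + n, sumPerm 1 τ⟩ : Pattern) = _
  apply pat_congr (Nat.add_comm 1 n)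
  intro i
  induction i using Fin.addCases with
  | left i =>
    have hi : i = 0 := Subsingleton.elim _ _
    subst hi
    rw [sumPerm_castAdd]
    rw [show Fin.cast (Nat.add_comm 1 n) (Fin.castAdd n (0 : Fin 1)) = (0 : Fin (n+1)) from rfl,
      insA_zero]
    simp
  | right j =>
    rw [sumPerm_natAdd]
    rw [show Fin.cast (Nat.add_comm 1 n) (Fin.natAdd 1 j) = Fin.succ j from
      Fin.ext (by simp [Nat.add_comm]), insA_succ]
    simp [Nat.add_comm]

lemma eqB (τ : Perm (Fin n)) : skewP onePat ⟨n, τ⟩ = (⟨n + 1, insB τ⟩ : Pattern) := by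
  show (⟨1 + n, skewPerm 1 τ⟩ : Pattern) = _
  apply pat_congr (Nat.add_comm 1 n)
  intro i
  induction i using Fin.addCases with
  | left i =>
    have hi : i = 0 := Subsingleton.elim _ _
    subst hi
    rw [skewPerm_castAdd]
    rw [show Fin.cast (Nat.add_comm 1 n) (Fin.castAdd n (0 : Fin 1)) = (0 : Fin (n+1)) from rfl,
      insB_zero]
    simp
  | right j =>
    rw [skewPerm_natAdd]
    rw [show Fin.cast (Nat.add_comm 1 n) (Fin.natAdd 1 j) = Fin.succ j from
      Fin.ext (by simp [Nat.add_comm]), insB_succ]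
    simp

lemma eqC (τ : Perm (Fin n)) : sumP ⟨n, τ⟩ onePat = (⟨n + 1, insC τ⟩ : Pattern) := by
  show (⟨n + 1, sumPerm τ 1⟩ : Pattern) = _
  apply pat_congr rfl
  intro i
  induction i using Fin.addCases with
  | left i =>
    rw [sumPerm_castAdd]
    rw [show Fin.cast rfl (Fin.castAdd 1 i) = Fin.castSucc i from rfl, insC_castSucc]
    simp
  | right j =>
    have hj : j = 0 := Subsingleton.elim _ _
    subst hj
    rw [sumPerm_natAdd]
    rw [show Fin.cast rfl (Fin.natAdd n (0 : Fin 1)) = Fin.last n from Fin.ext (by simp),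
      insC_last]
    simp

lemma eqD (τ : Perm (Fin n)) : skewP ⟨n, τ⟩ onePat = (⟨n + 1, insD τ⟩ : Pattern) := by
  show (⟨n + 1, skewPerm τ 1⟩ : Pattern) = _
  apply pat_congr rfl
  intro i
  induction i using Fin.addCases with
  | left i =>
    rw [skewPerm_castAdd]
    rw [show Fin.cast rfl (Fin.castAdd 1 i) = Fin.castSucc i from rfl, insD_castSucc]
    simp [Nat.add_comm]
  | right j =>
    have hj : j = 0 := Subsingleton.elim _ _
    subst hj
    rw [skewPerm_natAdd]
    rw [show Fin.cast rfl (Fin.natAdd n (0 : Fin 1)) = Fin.last n from Fin.ext (by simp),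
      insD_last]
    simp

lemma InY_of_pat_eq {p q : Pattern} (h : p = q) (hp : InY p.1 p.2) : InY q.1 q.2 := h ▸ hp

lemma InX_iff_InY {n : ℕ} (σ : Perm (Fin n)) : InX ⟨n, σ⟩ ↔ InY n σ := by
  constructor
  · intro h
    have : ∀ p : Pattern, InX p → InY p.1 p.2 := by
      intro p hp
      induction hp with
      | base => exact InY.base
      | sumL _ ih => exact InY_of_pat_eq (eqA _).symm (InY.A ih)
      | skewL _ ih => exact InY_of_pat_eq (eqB _).symm (InY.B ih)
      | sumR _ ih => exact InY_of_pat_eq (eqC _).symm (InY.C ih)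
      | skewR _ ih => exact InY_of_pat_eq (eqD _).symm (InY.D ih)
    exact this _ h
  · intro h
    induction h with
    | base => exact InX.base
    | A h ih => have := InX.sumL ih; rwa [eqA] at this
    | B h ih => have := InX.skewL ih; rwa [eqB] at this
    | C h ih => have := InX.sumR ih; rwa [eqC] at this
    | D h ih => have := InX.skewR ih; rwa [eqD] at this
end transfer


lemma InY_two (σ : Perm (Fin 2)) : InY 2 σ := by
  by_cases h : σ 0 = 0
  · have hσ : σ = insA 1 := by
      apply Equiv.ext
      intro x
      induction x using Fin.cases with
      | zero => rw [insA_zero]; exact h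
      | succ i =>
        have hi : i = 0 := Subsingleton.elim _ _
        subst hi
        rw [insA_succ, Perm.one_apply]
        have h1 : (σ (Fin.succ 0) : ℕ) < 2 := (σ _).isLt
        have h2 : σ (Fin.succ 0) ≠ 0 := by
          intro e
          exact Fin.succ_ne_zero 0 (σ.injective (e.trans h.symm))
        have h3 : (σ (Fin.succ 0) : ℕ) ≠ 0 := fun hv => h2 (Fin.ext hv)
        apply Fin.ext
        show (σ (Fin.succ 0) : ℕ) = 1
        omega
    rw [hσ]; exact InY.A InY.base
  · have h' : σ 0 = Fin.last 1 := by
      have h1 : (σ 0 : ℕ) < 2 := (σ _).isLt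
      have h3 : (σ 0 : ℕ) ≠ 0 := fun hv => h (Fin.ext hv)
      apply Fin.ext
      show (σ 0 : ℕ) = 1
      omega
    have hσ : σ = insB 1 := by
      apply Equiv.ext
      intro x
      induction x using Fin.cases with
      | zero => rw [insB_zero]; exact h'
      | succ i =>
        have hi : i = 0 := Subsingleton.elim _ _
        subst hi
        rw [insB_succ, Perm.one_apply, Fin.castSucc_zero]
        have h1 : (σ (Fin.succ 0) : ℕ) < 2 := (σ _).isLt
        have h2 : σ (Fin.succ 0) ≠ Fin.last 1 := by
          intro e
          have := σ.injective (e.trans h'.symm)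
          exact Fin.succ_ne_zero 0 this
        have h3 : (σ (Fin.succ 0) : ℕ) ≠ 1 := fun hv => h2 (Fin.ext hv)
        apply Fin.ext
        show (σ (Fin.succ 0) : ℕ) = 0
        omega
    rw [hσ]; exact InY.B InY.base

def Yset (k : ℕ) : Set (Perm (Fin k)) := {σ | InY k σ}

lemma xcount_eq {n : ℕ} (hn : 1 ≤ n) : xcount n = (Yset n).ncard := by
  rw [← Nat.card_coe_set_eq]
  unfold xcount
  apply Nat.card_congr
  apply Equiv.subtypeEquivRight
  intro σ
  show InX0 ⟨n, σ⟩ ↔ σ ∈ Yset n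
  unfold InX0 Yset
  simp only [Set.mem_setOf_eq]
  constructor
  · rintro (h | h)
    · exact (InX_iff_InY σ).mp h
    · omega
  · intro h
    exact Or.inl ((InX_iff_InY σ).mpr h)

def SetA (m : ℕ) : Set (Perm (Fin (m+3))) := {σ | InY (m+3) σ ∧ σ 0 = 0}
def SetB (m : ℕ) : Set (Perm (Fin (m+3))) := {σ | InY (m+3) σ ∧ σ 0 = Fin.last (m+2)}
def SetC (m : ℕ) : Set (Perm (Fin (m+3))) :=
  {σ | InY (m+3) σ ∧ σ (Fin.last (m+2)) = Fin.last (m+2)}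
def SetD (m : ℕ) : Set (Perm (Fin (m+3))) := {σ | InY (m+3) σ ∧ σ (Fin.last (m+2)) = 0}

lemma SetA_eq (m : ℕ) : SetA m = insA '' Yset (m+2) := by
  ext σ
  constructor
  · rintro ⟨hY, h0⟩
    obtain ⟨τ, hτ, rfl⟩ := delA (m+1) σ hY h0
    exact ⟨τ, hτ, rfl⟩
  · rintro ⟨τ, hτ, rfl⟩
    exact ⟨InY.A hτ, insA_zero τ⟩

lemma SetB_eq (m : ℕ) : SetB m = insB '' Yset (m+2) := by
  ext σ
  constructor
  · rintro ⟨hY, h0⟩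
    obtain ⟨τ, hτ, rfl⟩ := delB (m+1) σ hY h0
    exact ⟨τ, hτ, rfl⟩
  · rintro ⟨τ, hτ, rfl⟩
    exact ⟨InY.B hτ, insB_zero τ⟩

lemma SetC_eq (m : ℕ) : SetC m = insC '' Yset (m+2) := by
  ext σ
  constructor
  · rintro ⟨hY, h0⟩
    obtain ⟨τ, hτ, rfl⟩ := delC (m+1) σ hY h0
    exact ⟨τ, hτ, rfl⟩
  · rintro ⟨τ, hτ, rfl⟩
    exact ⟨InY.C hτ, insC_last τ⟩

lemma SetD_eq (m : ℕ) : SetD m = insD '' Yset (m+2) := by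
  ext σ
  constructor
  · rintro ⟨hY, h0⟩
    obtain ⟨τ, hτ, rfl⟩ := delD (m+1) σ hY h0
    exact ⟨τ, hτ, rfl⟩
  · rintro ⟨τ, hτ, rfl⟩
    exact ⟨InY.D hτ, insD_last τ⟩

lemma SetAC_eq (m : ℕ) : SetA m ∩ SetC m = (fun τ => insC (insA τ)) '' Yset (m+1) := by
  ext σ
  constructor
  · rintro ⟨⟨hY, h0⟩, ⟨-, hl⟩⟩
    obtain ⟨ρ, hρ, rfl⟩ := delA (m+1) σ hY h0
    rw [last_eq_succ, insA_succ] at hl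
    have hl' : ρ (Fin.last (m+1)) = Fin.last (m+1) :=
      Fin.succ_injective _ (by rw [Fin.succ_last]; exact hl)
    obtain ⟨τ, hτ, rfl⟩ := delC m ρ hρ hl'
    exact ⟨τ, hτ, (comAC τ).symm⟩
  · rintro ⟨τ, hτ, rfl⟩
    refine ⟨⟨InY.C (InY.A hτ), ?_⟩, ⟨InY.C (InY.A hτ), insC_last _⟩⟩
    rw [zero_eq_castSucc, insC_castSucc, insA_zero, Fin.castSucc_zero]

lemma SetBD_eq (m : ℕ) : SetB m ∩ SetD m = (fun τ => insD (insB τ)) '' Yset (m+1) := by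
  ext σ
  constructor
  · rintro ⟨⟨hY, h0⟩, ⟨-, hl⟩⟩
    obtain ⟨ρ, hρ, rfl⟩ := delB (m+1) σ hY h0
    rw [last_eq_succ, insB_succ] at hl
    have hl' : ρ (Fin.last (m+1)) = 0 :=
      Fin.castSucc_injective _ (by rw [Fin.castSucc_zero]; exact hl)
    obtain ⟨τ, hτ, rfl⟩ := delD m ρ hρ hl'
    exact ⟨τ, hτ, (comBD τ).symm⟩
  · rintro ⟨τ, hτ, rfl⟩
    refine ⟨⟨InY.D (InY.B hτ), ?_⟩, ⟨InY.D (InY.B hτ), insD_last _⟩⟩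
    rw [zero_eq_castSucc, insD_castSucc, insB_zero, Fin.succ_last]

lemma union_eq (m : ℕ) : Yset (m+3) = (SetA m ∪ SetC m) ∪ (SetB m ∪ SetD m) := by
  ext σ
  constructor
  · intro hY
    rcases shapeY (n := m+2) hY with h | h | h | h
    · exact Or.inl (Or.inl ⟨hY, h⟩)
    · exact Or.inr (Or.inl ⟨hY, h⟩)
    · exact Or.inl (Or.inr ⟨hY, h⟩)
    · exact Or.inr (Or.inr ⟨hY, h⟩)
  · rintro ((⟨h, -⟩ | ⟨h, -⟩) | (⟨h, -⟩ | ⟨h, -⟩)) <;> exact h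

lemma last_ne_zero' (m : ℕ) : (Fin.last (m+2) : Fin (m+3)) ≠ 0 := by
  simp [Fin.ext_iff]

lemma disjointACBD (m : ℕ) : Disjoint (SetA m ∪ SetC m) (SetB m ∪ SetD m) := by
  rw [Set.disjoint_left]
  rintro σ (⟨-, h1⟩ | ⟨-, h1⟩) (⟨-, h2⟩ | ⟨-, h2⟩)
  · exact absurd (h2.symm.trans h1) (last_ne_zero' m)
  · exact absurd (σ.injective (h1.trans h2.symm)).symm (last_ne_zero' m)
  · exact absurd (σ.injective (h2.trans h1.symm)).symm (last_ne_zero' m)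
  · exact absurd (h1.symm.trans h2) (last_ne_zero' m)

lemma key_rec (m : ℕ) : xcount (m+3) + 2 * xcount (m+1) = 4 * xcount (m+2) := by
  have hinjA : Function.Injective (insA (n := m+2)) := fun a b h => insA_inj h
  have hinjB : Function.Injective (insB (n := m+2)) := fun a b h => insB_inj h
  have hinjC : Function.Injective (insC (n := m+2)) := fun a b h => insC_inj h
  have hinjD : Function.Injective (insD (n := m+2)) := fun a b h => insD_inj h
  have hinjCA : Function.Injective (fun τ : Perm (Fin (m+1)) => insC (insA τ)) :=
    fun a b h => insA_inj (insC_inj h)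
  have hinjDB : Function.Injective (fun τ : Perm (Fin (m+1)) => insD (insB τ)) :=
    fun a b h => insB_inj (insD_inj h)
  have cA : (SetA m).ncard = xcount (m+2) := by
    rw [SetA_eq, Set.ncard_image_of_injective _ hinjA, xcount_eq (by omega)]
  have cB : (SetB m).ncard = xcount (m+2) := by
    rw [SetB_eq, Set.ncard_image_of_injective _ hinjB, xcount_eq (by omega)]
  have cC : (SetC m).ncard = xcount (m+2) := by
    rw [SetC_eq, Set.ncard_image_of_injective _ hinjC, xcount_eq (by omega)]
  have cD : (SetD m).ncard = xcount (m+2) := by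
    rw [SetD_eq, Set.ncard_image_of_injective _ hinjD, xcount_eq (by omega)]
  have cAC : (SetA m ∩ SetC m).ncard = xcount (m+1) := by
    rw [SetAC_eq, Set.ncard_image_of_injective _ hinjCA, xcount_eq (by omega)]
  have cBD : (SetB m ∩ SetD m).ncard = xcount (m+1) := by
    rw [SetBD_eq, Set.ncard_image_of_injective _ hinjDB, xcount_eq (by omega)]
  have e1 : xcount (m+3) = (SetA m ∪ SetC m).ncard + (SetB m ∪ SetD m).ncard := by
    rw [xcount_eq (by omega), union_eq m]
    exact Set.ncard_union_eq (disjointACBD m) (Set.toFinite _) (Set.toFinite _)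
  have e2 : (SetA m ∪ SetC m).ncard + (SetA m ∩ SetC m).ncard
      = (SetA m).ncard + (SetC m).ncard :=
    Set.ncard_union_add_ncard_inter _ _ (Set.toFinite _) (Set.toFinite _)
  have e3 : (SetB m ∪ SetD m).ncard + (SetB m ∩ SetD m).ncard
      = (SetB m).ncard + (SetD m).ncard :=
    Set.ncard_union_add_ncard_inter _ _ (Set.toFinite _) (Set.toFinite _)
  omega

theorem xcount_recurrence :
    xcount 0 = 1 ∧ xcount 1 = 1 ∧ xcount 2 = 2 ∧
      ∀ n : ℕ, 3 ≤ n → xcount n + 2 * xcount (n - 2) = 4 * xcount (n - 1) := by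
  refine ⟨?_, ?_, ?_, ?_⟩
  · unfold xcount
    rw [Nat.card_congr (Equiv.subtypeUnivEquiv (p := fun σ : Perm (Fin 0) => InX0 ⟨0, σ⟩) (fun σ => Or.inr rfl))]
    simp [Nat.card_eq_fintype_card]
  · unfold xcount
    rw [Nat.card_congr (Equiv.subtypeUnivEquiv
      (p := fun σ : Perm (Fin 1) => InX0 ⟨1, σ⟩) (fun σ => Or.inl ((InX_iff_InY σ).mpr (InY_one σ))))]
    simp [Nat.card_eq_fintype_card]
  · unfold xcount
    rw [Nat.card_congr (Equiv.subtypeUnivEquiv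
      (p := fun σ : Perm (Fin 2) => InX0 ⟨2, σ⟩) (fun σ => Or.inl ((InX_iff_InY σ).mpr (InY_two σ))))]
    simp [Nat.card_eq_fintype_card, Fintype.card_perm]
  · intro n hn
    obtain ⟨m, rfl⟩ : ∃ m, n = m + 3 := ⟨n - 3, by omega⟩
    have h1 : m + 3 - 2 = m + 1 := by omega
    have h2 : m + 3 - 1 = m + 2 := by omega
    rw [h1, h2]
    exact key_rec m
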